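/- Consider oriented bond percolation on ℤ² with parameter q, where each edge from z to z+(1,0) or z+(0,1) is independently open with probability q. If the probability θ that there is an infinite open oriented path from the origin is positive, then for every r ≥ 1, the probability that there is an open oriented path from (0,0) to (r,r) is at least (θ/2)². -/

import Mathlib

open MeasureTheory

def dirVec (d : Bool) : ℤ × ℤ := if d then (1, 0) else (0, 1)

abbrev EdgeConf := (ℤ × ℤ) × Bool → Bool

def OpenPathTo (ω : EdgeConf) (x y : ℤ × ℤ) : Prop :=
  ∃ (n : ℕ) (f : ℕ → ℤ × ℤ), f 0 = x ∧ f n = y ∧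
    ∀ m < n, ∃ d : Bool, ω (f m, d) = true ∧ f (m + 1) = f m + dirVec d

def InfOpenPath (ω : EdgeConf) (x : ℤ × ℤ) : Prop :=
  ∃ f : ℕ → ℤ × ℤ, f 0 = x ∧
    ∀ m : ℕ, ∃ d : Bool, ω (f m, d) = true ∧ f (m + 1) = f m + dirVec d

def IIDEdges (μ : Measure EdgeConf) (q : ℝ) : Prop :=
  ∀ (s : Finset ((ℤ × ℤ) × Bool)) (b : (ℤ × ℤ) × Bool → Bool),
    μ {ω | ∀ e ∈ s, ω e = b e} =
      ENNReal.ofReal (∏ e ∈ s, if b e then q else 1 - q)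

namespace OPerc

abbrev Edge := (ℤ × ℤ) × Bool

section PathFacts

variable {f : ℕ → ℤ × ℤ} {n : ℕ}

lemma path_step (h : ∀ m < n, ∃ d : Bool, f (m + 1) = f m + dirVec d)
    {m : ℕ} (hm : m < n) :
    (f m).1 ≤ (f (m+1)).1 ∧ (f (m+1)).1 ≤ (f m).1 + 1 ∧
    (f m).2 ≤ (f (m+1)).2 ∧ (f (m+1)).2 ≤ (f m).2 + 1 := by
  obtain ⟨d, hd⟩ := h m hm
  rw [hd]
  cases d <;> simp [dirVec, Prod.fst_add, Prod.snd_add]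

lemma path_sum (h : ∀ m < n, ∃ d : Bool, f (m + 1) = f m + dirVec d) :
    ∀ m, m ≤ n → (f m).1 + (f m).2 = (f 0).1 + (f 0).2 + m := by
  intro m
  induction m with
  | zero => simp
  | succ k ih =>
    intro hk
    obtain ⟨d, hd⟩ := h k (by omega)
    have h1 : (f (k+1)).1 = (f k).1 + (dirVec d).1 := by rw [hd]; rfl
    have h2 : (f (k+1)).2 = (f k).2 + (dirVec d).2 := by rw [hd]; rfl
    have := ih (by omega)
    cases d <;> simp [dirVec] at h1 h2 <;> push_cast <;> omega

lemma path_mono_fst (h : ∀ m < n, ∃ d : Bool, f (m + 1) = f m + dirVec d) :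
    ∀ m, m ≤ n → ∀ k, k ≤ m → (f k).1 ≤ (f m).1 := by
  intro m
  induction m with
  | zero => intro _ k hk; obtain rfl := Nat.le_zero.mp hk; exact le_rfl
  | succ j ih =>
    intro hj k hk
    rcases Nat.eq_or_lt_of_le hk with rfl | hlt
    · exact le_rfl
    · exact le_trans (ih (by omega) k (by omega)) (path_step h (by omega)).1

lemma path_mono_snd (h : ∀ m < n, ∃ d : Bool, f (m + 1) = f m + dirVec d) :
    ∀ m, m ≤ n → ∀ k, k ≤ m → (f k).2 ≤ (f m).2 := by
  intro m
  induction m with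
  | zero => intro _ k hk; obtain rfl := Nat.le_zero.mp hk; exact le_rfl
  | succ j ih =>
    intro hj k hk
    rcases Nat.eq_or_lt_of_le hk with rfl | hlt
    · exact le_rfl
    · exact le_trans (ih (by omega) k (by omega)) (path_step h (by omega)).2.2.1

lemma int_ivt (N : ℕ) (d : ℕ → ℤ) (h0 : d 0 ≤ 0) (hN : 0 ≤ d N)
    (hs : ∀ m < N, d (m+1) ≤ d m + 1) : ∃ m ≤ N, d m = 0 := by
  have hex : ∃ m, m ≤ N ∧ 0 ≤ d m := ⟨N, le_rfl, hN⟩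
  obtain ⟨hkN, hk0⟩ := Nat.find_spec hex
  set k := Nat.find hex with hkdef
  by_cases hz : k = 0
  · refine ⟨0, by omega, le_antisymm h0 ?_⟩
    rw [hz] at hk0; exact hk0
  · have hmin : ¬ (k - 1 ≤ N ∧ 0 ≤ d (k - 1)) := Nat.find_min hex (by omega)
    have hd1 : d (k - 1) < 0 := by
      by_contra hc
      exact hmin ⟨by omega, by omega⟩
    have hst : d k ≤ d (k-1) + 1 := by
      have : k - 1 + 1 = k := by omega
      have := hs (k-1) (by omega)
      rwa [‹k - 1 + 1 = k›] at this
    exact ⟨k, hkN, by omega⟩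

end PathFacts

/-- Crossing: a path from the origin to the antidiagonal ending at or below the
diagonal, together with a path from the antidiagonal (starting at or right of
the diagonal through the origin) to `(r,r)`, yields a path to `(r,r)`. -/
lemma cross (r : ℕ) (ω : EdgeConf) (a b : ℤ) (ha : (r:ℤ) ≤ a) (hb : 0 ≤ b)
    (hA : OpenPathTo ω (0, 0) (a, 2*(r:ℤ) - a))
    (hB : OpenPathTo ω (b, -b) ((r:ℤ), (r:ℤ))) :
    OpenPathTo ω (0, 0) ((r:ℤ), (r:ℤ)) := by
  obtain ⟨nf, f, hf0, hfn, hf⟩ := hA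
  obtain ⟨ng, g, hg0, hgn, hg⟩ := hB
  have hfstep : ∀ m < nf, ∃ d : Bool, f (m + 1) = f m + dirVec d := by
    intro m hm; obtain ⟨d, _, hd⟩ := hf m hm; exact ⟨d, hd⟩
  have hgstep : ∀ m < ng, ∃ d : Bool, g (m + 1) = g m + dirVec d := by
    intro m hm; obtain ⟨d, _, hd⟩ := hg m hm; exact ⟨d, hd⟩
  have hfsum := path_sum hfstep nf le_rfl
  have hgsum := path_sum hgstep ng le_rfl
  rw [hf0, hfn] at hfsum
  rw [hg0, hgn] at hgsum
  simp at hfsum hgsum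
  have hnf : nf = 2 * r := by omega
  have hng : ng = 2 * r := by omega
  subst hnf hng
  -- discrete IVT on the difference of first coordinates
  have hd0 : (f 0).1 - (g 0).1 ≤ 0 := by rw [hf0, hg0]; simpa using hb
  have hdN : 0 ≤ (f (2*r)).1 - (g (2*r)).1 := by rw [hfn, hgn]; simpa using ha
  obtain ⟨m, hm, hm0⟩ := int_ivt (2*r) (fun m => (f m).1 - (g m).1) hd0 hdN
    (by
      intro m hm
      have h1 := (path_step hfstep (n := 2*r) hm).2.1
      have h2 := (path_step hgstep (n := 2*r) hm).1
      omega)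
  replace hm0 : (f m).1 - (g m).1 = 0 := hm0
  have hfg : f m = g m := by
    have hsf := path_sum hfstep m hm
    have hsg := path_sum hgstep m hm
    rw [hf0] at hsf
    rw [hg0] at hsg
    have h2 : (f m).2 = (g m).2 := by simp at hsf hsg; omega
    exact Prod.ext (by omega) h2
  refine ⟨2*r, fun k => if k < m then f k else g k, ?_, ?_, ?_⟩
  · by_cases h0 : 0 < m
    · simp [h0, hf0]
    · have : m = 0 := by omega
      subst this
      simp [← hfg, hf0]
  · have : ¬ (2*r < m) := by omega
    simp [this, hgn]
  · intro k hk
    by_cases hk1 : k + 1 < m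
    · obtain ⟨d, hopen, hstep⟩ := hf k (by omega)
      exact ⟨d, by simpa [show k < m by omega] using hopen,
        by simp [hk1, show k < m by omega]; exact hstep⟩
    · by_cases hk2 : k + 1 = m
      · obtain ⟨d, hopen, hstep⟩ := hf k (by omega)
        refine ⟨d, by simpa [show k < m by omega] using hopen, ?_⟩
        have hgf : g (k+1) = f (k+1) := by rw [hk2, ← hfg]
        simp only
        rw [if_neg hk1, if_pos (show k < m by omega), hgf]
        exact hstep
      · obtain ⟨d, hopen, hstep⟩ := hg k (by omega)
        refine ⟨d, by simpa [show ¬ (k < m) by omega] using hopen, ?_⟩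
        simp [hk1, show ¬ (k < m) by omega]
        exact hstep


open Finset

open scoped Classical

noncomputable section Meas

variable (q : ℝ)

/-- Extend a configuration on a finite edge set by `false`. -/
def extconf (s : Finset Edge) (η : {e // e ∈ s} → Bool) : EdgeConf :=
  fun e => if h : e ∈ s then η ⟨e, h⟩ else false

/-- Bernoulli weight of a finite configuration. -/
def wt (s : Finset Edge) (η : {e // e ∈ s} → Bool) : ℝ :=
  ∏ i : {e // e ∈ s}, (if η i then q else 1 - q)

lemma wt_nonneg (hq0 : 0 ≤ q) (hq1 : q ≤ 1) (s : Finset Edge)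
    (η : {e // e ∈ s} → Bool) : 0 ≤ wt q s η :=
  Finset.prod_nonneg fun i _ => by by_cases h : η i <;> simp [h, hq0] <;> linarith

variable {μ : Measure EdgeConf} [IsProbabilityMeasure μ]

/-- A local event's probability is the sum of the weights of the finite
configurations realizing it. -/
lemma measure_local (hq0 : 0 ≤ q) (hq1 : q ≤ 1) (hiid : IIDEdges μ q)
    (s : Finset Edge) (P : EdgeConf → Prop)
    (hP : ∀ ω ω', (∀ e ∈ s, ω e = ω' e) → (P ω ↔ P ω')) :
    μ {ω | P ω} =
      ENNReal.ofReal (∑ η ∈ Finset.univ.filter (fun η => P (extconf s η)), wt q s η) := by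
  have hset : {ω | P ω} =
      ⋃ η ∈ Finset.univ.filter (fun η => P (extconf s η)),
        {ω : EdgeConf | ∀ e ∈ s, ω e = extconf s η e} := by
    ext ω
    simp only [Set.mem_setOf_eq, Set.mem_iUnion, Finset.mem_filter, Finset.mem_univ, true_and]
    constructor
    · intro hω
      refine ⟨fun i => ω i.1, ?_, ?_⟩
      · exact (hP ω _ (fun e he => by simp [extconf, he])).mp hω
      · intro e he; simp [extconf, he]
    · rintro ⟨η, hη, hagree⟩
      exact (hP ω (extconf s η) hagree).mpr hη
  rw [hset, measure_biUnion_finset]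
  · have hterm : ∀ η ∈ Finset.univ.filter (fun η => P (extconf s η)),
        μ {ω : EdgeConf | ∀ e ∈ s, ω e = extconf s η e} = ENNReal.ofReal (wt q s η) := by
      intro η _
      rw [hiid s (extconf s η)]
      congr 1
      rw [wt, ← Finset.prod_attach s (fun e => if extconf s η e then q else 1 - q),
        Finset.univ_eq_attach]
      exact Finset.prod_congr rfl fun i _ => by simp [extconf, i.2]
    rw [Finset.sum_congr rfl hterm,
      ← ENNReal.ofReal_sum_of_nonneg (fun η _ => wt_nonneg q hq0 hq1 s η)]
  · -- pairwise disjoint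
    intro η₁ h₁ η₂ h₂ hne
    simp only [Function.onFun]
    rw [Set.disjoint_left]
    intro ω hω1 hω2
    apply hne
    funext i
    have e1 : ω i.1 = extconf s η₁ i.1 := hω1 i.1 i.2
    have e2 : ω i.1 = extconf s η₂ i.1 := hω2 i.1 i.2
    have : extconf s η₁ i.1 = extconf s η₂ i.1 := e1 ▸ e2
    simpa [extconf, i.2] using this
  · intro η _
    have : {ω : EdgeConf | ∀ e ∈ s, ω e = extconf s η e} =
        ⋂ e ∈ s, {ω : EdgeConf | ω e = extconf s η e} := by
      ext ω; simp
    rw [this]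
    exact MeasurableSet.biInter s.countable_toSet fun e _ =>
      (measurable_pi_apply e) (MeasurableSet.singleton _)

/-- Invariance of local events under an involutive permutation of the edges. -/
lemma measure_precomp (hq0 : 0 ≤ q) (hq1 : q ≤ 1) (hiid : IIDEdges μ q)
    (σe : Edge → Edge) (hσ : Function.Involutive σe)
    (s : Finset Edge) (hs : ∀ e ∈ s, σe e ∈ s) (P : EdgeConf → Prop)
    (hP : ∀ ω ω', (∀ e ∈ s, ω e = ω' e) → (P ω ↔ P ω')) :
    μ {ω | P (ω ∘ σe)} = μ {ω | P ω} := by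
  have hQ : ∀ ω ω', (∀ e ∈ s, ω e = ω' e) → (P (ω ∘ σe) ↔ P (ω' ∘ σe)) := by
    intro ω ω' h
    exact hP _ _ fun e he => h (σe e) (hs e he)
  rw [measure_local q hq0 hq1 hiid s _ hQ, measure_local q hq0 hq1 hiid s P hP]
  congr 1
  -- reindex by precomposition with the involution on the subtype
  have hes : ∀ i : {e // e ∈ s}, σe i.1 ∈ s := fun i => hs i.1 i.2
  set es : {e // e ∈ s} → {e // e ∈ s} := fun i => ⟨σe i.1, hes i⟩ with hesdef
  have hes_inv : Function.Involutive es := by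
    intro i; exact Subtype.ext (hσ i.1)
  have hkey : ∀ η : {e // e ∈ s} → Bool, extconf s (η ∘ es) = extconf s η ∘ σe := by
    intro η
    funext e
    by_cases he : e ∈ s
    · have h2 : σe e ∈ s := hs e he
      simp [extconf, he, h2, hesdef]
    · have h2 : σe e ∉ s := fun hc => he (by simpa [hσ e] using hs _ hc)
      simp [extconf, he, h2]
  have hbij : Function.Bijective (fun η : {e // e ∈ s} → Bool => η ∘ es) :=
    Function.Involutive.bijective (fun η => by funext i; simp [hes_inv i])
  rw [Finset.sum_filter, Finset.sum_filter]
  refine Fintype.sum_bijective _ hbij _ _ (fun η => ?_)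
  have h2 : wt q s (η ∘ es) = wt q s η := by
    rw [wt, wt]
    exact Fintype.prod_bijective es hes_inv.bijective _ _ (fun i => rfl)
  rw [hkey η, h2]

/-- Harris/FKG inequality for two increasing local events. -/
lemma measure_fkg (hq0 : 0 ≤ q) (hq1 : q ≤ 1) (hiid : IIDEdges μ q)
    (s : Finset Edge) (P Q : EdgeConf → Prop)
    (hPl : ∀ ω ω', (∀ e ∈ s, ω e = ω' e) → (P ω ↔ P ω'))
    (hQl : ∀ ω ω', (∀ e ∈ s, ω e = ω' e) → (Q ω ↔ Q ω'))
    (hPm : ∀ ω ω' : EdgeConf, (∀ e, ω e = true → ω' e = true) → P ω → P ω')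
    (hQm : ∀ ω ω' : EdgeConf, (∀ e, ω e = true → ω' e = true) → Q ω → Q ω') :
    (μ {ω | P ω}).toReal * (μ {ω | Q ω}).toReal ≤ (μ {ω | P ω ∧ Q ω}).toReal := by
  classical
  have hPQl : ∀ ω ω', (∀ e ∈ s, ω e = ω' e) → ((P ω ∧ Q ω) ↔ (P ω' ∧ Q ω')) :=
    fun ω ω' h => and_congr (hPl ω ω' h) (hQl ω ω' h)
  -- indicator functions on the finite configuration lattice
  set F : ({e // e ∈ s} → Bool) → ℝ := fun η => if P (extconf s η) then 1 else 0 with hF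
  set G : ({e // e ∈ s} → Bool) → ℝ := fun η => if Q (extconf s η) then 1 else 0 with hG
  have hext_mono : ∀ (η η' : {e // e ∈ s} → Bool), η ≤ η' →
      ∀ e, extconf s η e = true → extconf s η' e = true := by
    intro η η' hle e he
    by_cases h : e ∈ s
    · simp only [extconf, dif_pos h] at he ⊢
      exact Bool.le_iff_imp.mp (hle ⟨e, h⟩) he
    · simp [extconf, h] at he
  have hFmono : Monotone F := by
    intro η η' hle
    simp only [hF]
    by_cases h : P (extconf s η)
    · rw [if_pos h, if_pos (hPm _ _ (hext_mono η η' hle) h)]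
    · rw [if_neg h]
      by_cases h' : P (extconf s η') <;> simp [h']
  have hGmono : Monotone G := by
    intro η η' hle
    simp only [hG]
    by_cases h : Q (extconf s η)
    · rw [if_pos h, if_pos (hQm _ _ (hext_mono η η' hle) h)]
    · rw [if_neg h]
      by_cases h' : Q (extconf s η') <;> simp [h']
  have hwt_mod : ∀ η η' : {e // e ∈ s} → Bool,
      wt q s η * wt q s η' ≤ wt q s (η ⊓ η') * wt q s (η ⊔ η') := by
    intro η η'
    apply le_of_eq
    rw [wt, wt, wt, wt, ← Finset.prod_mul_distrib, ← Finset.prod_mul_distrib]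
    refine Finset.prod_congr rfl fun i _ => ?_
    cases hη : η i <;> cases hη' : η' i <;>
      simp [Pi.inf_apply, Pi.sup_apply, min_def, max_def,
        hη, hη', mul_comm]
  have hfkg := fkg (μ := wt q s) (f := F) (g := G)
    (fun η => wt_nonneg q hq0 hq1 s η)
    (fun η => by by_cases h : P (extconf s η) <;> simp [hF, h])
    (fun η => by by_cases h : Q (extconf s η) <;> simp [hG, h])
    hFmono hGmono hwt_mod
  -- ∑ wt = 1
  have hsum1 : ∑ η : {e // e ∈ s} → Bool, wt q s η = 1 := by
    have htriv := measure_local (μ := μ) q hq0 hq1 hiid s (fun _ => True) (fun _ _ _ => Iff.rfl)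
    simp only [Set.setOf_true, measure_univ, Finset.filter_true] at htriv
    have hnn : 0 ≤ ∑ η : {e // e ∈ s} → Bool, wt q s η :=
      Finset.sum_nonneg fun η _ => wt_nonneg q hq0 hq1 s η
    have := ENNReal.ofReal_eq_one.mp htriv.symm
    simpa using this
  have hμP : (μ {ω | P ω}).toReal = ∑ η : {e // e ∈ s} → Bool, wt q s η * F η := by
    rw [measure_local q hq0 hq1 hiid s P hPl, ENNReal.toReal_ofReal
      (Finset.sum_nonneg fun η _ => wt_nonneg q hq0 hq1 s η)]
    rw [Finset.sum_filter]
    exact Finset.sum_congr rfl fun η _ => by by_cases h : P (extconf s η) <;> simp [hF, h]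
  have hμQ : (μ {ω | Q ω}).toReal = ∑ η : {e // e ∈ s} → Bool, wt q s η * G η := by
    rw [measure_local q hq0 hq1 hiid s Q hQl, ENNReal.toReal_ofReal
      (Finset.sum_nonneg fun η _ => wt_nonneg q hq0 hq1 s η)]
    rw [Finset.sum_filter]
    exact Finset.sum_congr rfl fun η _ => by by_cases h : Q (extconf s η) <;> simp [hG, h]
  have hμPQ : (μ {ω | P ω ∧ Q ω}).toReal
      = ∑ η : {e // e ∈ s} → Bool, wt q s η * (F η * G η) := by
    rw [measure_local q hq0 hq1 hiid s _ hPQl, ENNReal.toReal_ofReal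
      (Finset.sum_nonneg fun η _ => wt_nonneg q hq0 hq1 s η)]
    rw [Finset.sum_filter]
    refine Finset.sum_congr rfl fun η _ => ?_
    by_cases h1 : P (extconf s η) <;> by_cases h2 : Q (extconf s η) <;>
      simp [hF, hG, h1, h2]
  rw [hμP, hμQ, hμPQ]
  calc (∑ η, wt q s η * F η) * ∑ η, wt q s η * G η
      ≤ (∑ η, wt q s η) * ∑ η, wt q s η * (F η * G η) := hfkg
    _ = ∑ η, wt q s η * (F η * G η) := by rw [hsum1, one_mul]

end Meas


/-! ### Symmetries of the lattice -/

/-- Reflection about the main diagonal, on edges. -/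
def sigmaRho : Edge → Edge := fun e => ((e.1.2, e.1.1), !e.2)

/-- Reflection about the antidiagonal `x + y = c`, on points. -/
def tauPt (c : ℤ) (z : ℤ × ℤ) : ℤ × ℤ := (c - z.2, c - z.1)

/-- Reflection about the antidiagonal `x + y = c`, on edges (with orientation
reversal). -/
def sigmaTau (c : ℤ) : Edge → Edge := fun e =>
  if e.2 then ((c - e.1.2, c - e.1.1 - 1), false) else ((c - e.1.2 - 1, c - e.1.1), true)

lemma sigmaRho_invol : Function.Involutive sigmaRho := by
  intro e; simp [sigmaRho]

lemma sigmaTau_invol (c : ℤ) : Function.Involutive (sigmaTau c) := by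
  rintro ⟨⟨x, y⟩, d⟩
  cases d <;> simp [sigmaTau, Prod.ext_iff] <;> omega

/-! ### Path correspondence under the symmetries -/

lemma openPath_swap_mp (ω : EdgeConf) (x y : ℤ × ℤ)
    (h : OpenPathTo (fun e => ω (sigmaRho e)) x y) :
    OpenPathTo ω (x.2, x.1) (y.2, y.1) := by
  obtain ⟨n, f, hf0, hfn, hf⟩ := h
  refine ⟨n, fun m => ((f m).2, (f m).1), by simp [hf0], by simp [hfn], ?_⟩
  intro m hm
  obtain ⟨d, hopen, hstep⟩ := hf m hm
  refine ⟨!d, ?_, ?_⟩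
  · simpa [sigmaRho] using hopen
  · show ((f (m+1)).2, (f (m+1)).1) = ((f m).2, (f m).1) + dirVec (!d)
    rw [hstep]; cases d <;> simp [dirVec, Prod.ext_iff]
lemma openPath_swap (ω : EdgeConf) (x y : ℤ × ℤ) :
    OpenPathTo (fun e => ω (sigmaRho e)) x y ↔ OpenPathTo ω (x.2, x.1) (y.2, y.1) := by
  constructor
  · exact openPath_swap_mp ω x y
  · intro h
    have h2 : OpenPathTo (fun e => (fun e' => ω (sigmaRho e')) (sigmaRho e)) (x.2, x.1) (y.2, y.1) := by
      have : (fun e => (fun e' => ω (sigmaRho e')) (sigmaRho e)) = ω := by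
        funext e; show ω (sigmaRho (sigmaRho e)) = ω e; rw [sigmaRho_invol e]
      rwa [this]
    simpa using openPath_swap_mp (fun e' => ω (sigmaRho e')) (x.2, x.1) (y.2, y.1) h2

lemma openPath_tau_mp (c : ℤ) (ω : EdgeConf) (x y : ℤ × ℤ)
    (h : OpenPathTo (fun e => ω (sigmaTau c e)) x y) :
    OpenPathTo ω (tauPt c y) (tauPt c x) := by
  obtain ⟨n, f, hf0, hfn, hf⟩ := h
  refine ⟨n, fun m => tauPt c (f (n - m)), by simp [hfn], by simp [hf0], ?_⟩
  intro m hm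
  have hk1 : n - m = (n - m - 1) + 1 := by omega
  have hk2 : n - (m + 1) = n - m - 1 := by omega
  set k := n - m - 1 with hk
  obtain ⟨d, hopen, hstep⟩ := hf k (by omega)
  cases d
  · -- north step becomes east step
    refine ⟨true, ?_, ?_⟩
    · show ω (tauPt c (f (n - m)), true) = true
      have h1 : tauPt c (f (n - m)) = ((c - (f k).2 - 1, c - (f k).1)) := by
        rw [hk1, hstep]; simp [tauPt, dirVec, Prod.ext_iff]; omega
      rw [h1]
      simpa [sigmaTau] using hopen
    · show tauPt c (f (n - (m+1))) = tauPt c (f (n - m)) + dirVec true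
      rw [hk2, hk1, hstep]
      simp [tauPt, dirVec, Prod.ext_iff]; omega
  · refine ⟨false, ?_, ?_⟩
    · show ω (tauPt c (f (n - m)), false) = true
      have h1 : tauPt c (f (n - m)) = ((c - (f k).2, c - (f k).1 - 1)) := by
        rw [hk1, hstep]; simp [tauPt, dirVec, Prod.ext_iff]; omega
      rw [h1]
      simpa [sigmaTau] using hopen
    · show tauPt c (f (n - (m+1))) = tauPt c (f (n - m)) + dirVec false
      rw [hk2, hk1, hstep]
      simp [tauPt, dirVec, Prod.ext_iff]; omega

lemma openPath_tau (c : ℤ) (ω : EdgeConf) (x y : ℤ × ℤ) :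
    OpenPathTo (fun e => ω (sigmaTau c e)) x y ↔ OpenPathTo ω (tauPt c y) (tauPt c x) := by
  constructor
  · exact openPath_tau_mp c ω x y
  · intro h
    have h2 : OpenPathTo (fun e => (fun e' => ω (sigmaTau c e')) (sigmaTau c e))
        (tauPt c y) (tauPt c x) := by
      have : (fun e => (fun e' => ω (sigmaTau c e')) (sigmaTau c e)) = ω := by
        funext e; show ω (sigmaTau c (sigmaTau c e)) = ω e; rw [sigmaTau_invol c e]
      rwa [this]
    have := openPath_tau_mp c (fun e' => ω (sigmaTau c e')) (tauPt c y) (tauPt c x) h2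
    simpa [tauPt] using this

/-! ### Events and locality -/

/-- The support of our events: all edges within the box `[-2r, 2r]²`. -/
noncomputable def sE (r : ℕ) : Finset Edge :=
  (Finset.Icc ((-(2*(r:ℤ)), -(2*(r:ℤ))) : ℤ × ℤ) ((2*(r:ℤ), 2*(r:ℤ)) : ℤ × ℤ)) ×ˢ
    (Finset.univ : Finset Bool)

lemma mem_sE (r : ℕ) (e : Edge) :
    e ∈ sE r ↔ -(2*(r:ℤ)) ≤ e.1.1 ∧ -(2*(r:ℤ)) ≤ e.1.2 ∧ e.1.1 ≤ 2*(r:ℤ) ∧ e.1.2 ≤ 2*(r:ℤ) := by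
  simp [sE, Finset.mem_product, Finset.mem_Icc, Prod.le_def]
  tauto

/-- Forward events: an open path from the origin to a point `(a, 2r - a)` of
the antidiagonal with `a` satisfying `c`. -/
def FwdEv (r : ℕ) (c : ℤ → Prop) (ω : EdgeConf) : Prop :=
  ∃ a : ℤ, c a ∧ OpenPathTo ω (0, 0) (a, 2*(r:ℤ) - a)

/-- Backward events: an open path from a point `(b, -b)` of the antidiagonal
through the origin to `(r, r)`, with `b` satisfying `c`. -/
def BwdEv (r : ℕ) (c : ℤ → Prop) (ω : EdgeConf) : Prop :=
  ∃ b : ℤ, c b ∧ OpenPathTo ω (b, -b) ((r:ℤ), (r:ℤ))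

lemma openPath_le {ω : EdgeConf} {x y : ℤ × ℤ} (h : OpenPathTo ω x y) :
    x.1 ≤ y.1 ∧ x.2 ≤ y.2 := by
  obtain ⟨n, f, hf0, hfn, hf⟩ := h
  have hstep : ∀ m < n, ∃ d, f (m+1) = f m + dirVec d :=
    fun m hm => (hf m hm).imp fun d hd => hd.2
  constructor
  · rw [← hf0, ← hfn]; exact path_mono_fst hstep n le_rfl 0 (Nat.zero_le n)
  · rw [← hf0, ← hfn]; exact path_mono_snd hstep n le_rfl 0 (Nat.zero_le n)

lemma openPath_transfer {ω ω' : EdgeConf} {x y : ℤ × ℤ} (h : OpenPathTo ω x y)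
    (hedge : ∀ (z : ℤ × ℤ) (d : Bool), x.1 ≤ z.1 → z.1 ≤ y.1 → x.2 ≤ z.2 → z.2 ≤ y.2 →
      ω (z, d) = ω' (z, d)) : OpenPathTo ω' x y := by
  obtain ⟨n, f, hf0, hfn, hf⟩ := h
  have hstep : ∀ m < n, ∃ d, f (m+1) = f m + dirVec d :=
    fun m hm => (hf m hm).imp fun d hd => hd.2
  refine ⟨n, f, hf0, hfn, fun m hm => ?_⟩
  obtain ⟨d, hopen, hd⟩ := hf m hm
  refine ⟨d, ?_, hd⟩
  have h1 : (f 0).1 ≤ (f m).1 := path_mono_fst hstep m hm.le 0 (Nat.zero_le m)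
  have h2 : (f m).1 ≤ (f n).1 := path_mono_fst hstep n le_rfl m hm.le
  have h3 : (f 0).2 ≤ (f m).2 := path_mono_snd hstep m hm.le 0 (Nat.zero_le m)
  have h4 : (f m).2 ≤ (f n).2 := path_mono_snd hstep n le_rfl m hm.le
  rw [hf0] at h1 h3
  rw [hfn] at h2 h4
  rw [← hedge (f m) d h1 h2 h3 h4]
  exact hopen

lemma FwdEv_local_mp (r : ℕ) (c : ℤ → Prop) (ω ω' : EdgeConf)
    (h : ∀ e ∈ sE r, ω e = ω' e) (hA : FwdEv r c ω) : FwdEv r c ω' := by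
  obtain ⟨a, ha, hpath⟩ := hA
  obtain ⟨h1, h2⟩ := openPath_le hpath
  simp only at h1 h2
  refine ⟨a, ha, openPath_transfer hpath ?_⟩
  intro z d hz1 hz2 hz3 hz4
  apply h
  rw [mem_sE]
  simp only at hz1 hz2 hz3 hz4 ⊢
  omega

lemma BwdEv_local_mp (r : ℕ) (c : ℤ → Prop) (ω ω' : EdgeConf)
    (h : ∀ e ∈ sE r, ω e = ω' e) (hA : BwdEv r c ω) : BwdEv r c ω' := by
  obtain ⟨b, hb, hpath⟩ := hA
  obtain ⟨h1, h2⟩ := openPath_le hpath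
  simp only at h1 h2
  refine ⟨b, hb, openPath_transfer hpath ?_⟩
  intro z d hz1 hz2 hz3 hz4
  apply h
  rw [mem_sE]
  simp only at hz1 hz2 hz3 hz4 ⊢
  omega

lemma FwdEv_local (r : ℕ) (c : ℤ → Prop) {s : Finset Edge} (hs : sE r ⊆ s) :
    ∀ ω ω' : EdgeConf, (∀ e ∈ s, ω e = ω' e) → (FwdEv r c ω ↔ FwdEv r c ω') := by
  intro ω ω' h
  constructor
  · exact FwdEv_local_mp r c ω ω' (fun e he => h e (hs he))
  · exact FwdEv_local_mp r c ω' ω (fun e he => (h e (hs he)).symm)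

lemma BwdEv_local (r : ℕ) (c : ℤ → Prop) {s : Finset Edge} (hs : sE r ⊆ s) :
    ∀ ω ω' : EdgeConf, (∀ e ∈ s, ω e = ω' e) → (BwdEv r c ω ↔ BwdEv r c ω') := by
  intro ω ω' h
  constructor
  · exact BwdEv_local_mp r c ω ω' (fun e he => h e (hs he))
  · exact BwdEv_local_mp r c ω' ω (fun e he => (h e (hs he)).symm)

lemma openPath_mono {ω ω' : EdgeConf} (h : ∀ e, ω e = true → ω' e = true)
    {x y : ℤ × ℤ} (hp : OpenPathTo ω x y) : OpenPathTo ω' x y := by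
  obtain ⟨n, f, hf0, hfn, hf⟩ := hp
  exact ⟨n, f, hf0, hfn, fun m hm => (hf m hm).imp fun d hd => ⟨h _ hd.1, hd.2⟩⟩

lemma FwdEv_mono (r : ℕ) (c : ℤ → Prop) :
    ∀ ω ω' : EdgeConf, (∀ e, ω e = true → ω' e = true) → FwdEv r c ω → FwdEv r c ω' :=
  fun _ _ h => fun ⟨a, ha, hp⟩ => ⟨a, ha, openPath_mono h hp⟩

lemma BwdEv_mono (r : ℕ) (c : ℤ → Prop) :
    ∀ ω ω' : EdgeConf, (∀ e, ω e = true → ω' e = true) → BwdEv r c ω → BwdEv r c ω' :=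
  fun _ _ h => fun ⟨b, hb, hp⟩ => ⟨b, hb, openPath_mono h hp⟩

/-! ### Event correspondences under the symmetries -/

lemma FwdEv_swap (r : ℕ) (c : ℤ → Prop) (ω : EdgeConf) :
    FwdEv r c (fun e => ω (sigmaRho e)) ↔ FwdEv r (fun a => c (2*(r:ℤ) - a)) ω := by
  constructor
  · rintro ⟨a, ha, hp⟩
    have := openPath_swap_mp ω _ _ hp
    refine ⟨2*(r:ℤ) - a, by simpa using ha, ?_⟩
    simpa using this
  · rintro ⟨a, ha, hp⟩
    refine ⟨2*(r:ℤ) - a, ha, ?_⟩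
    rw [openPath_swap]
    simpa [show (2*(r:ℤ) - (2*(r:ℤ) - a)) = a by ring] using hp

lemma BwdEv_swap (r : ℕ) (c : ℤ → Prop) (ω : EdgeConf) :
    BwdEv r c (fun e => ω (sigmaRho e)) ↔ BwdEv r (fun b => c (-b)) ω := by
  constructor
  · rintro ⟨b, hb, hp⟩
    have := openPath_swap_mp ω _ _ hp
    exact ⟨-b, by simpa using hb, by simpa using this⟩
  · rintro ⟨b, hb, hp⟩
    refine ⟨-b, by simpa using hb, ?_⟩
    rw [openPath_swap]
    simpa using hp

lemma BwdEv_tau (r : ℕ) (c : ℤ → Prop) (ω : EdgeConf) :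
    BwdEv r c (fun e => ω (sigmaTau (r:ℤ) e)) ↔ FwdEv r (fun a => c (a - (r:ℤ))) ω := by
  constructor
  · rintro ⟨b, hb, hp⟩
    have := openPath_tau_mp (r:ℤ) ω _ _ hp
    refine ⟨(r:ℤ) + b, by simpa using hb, ?_⟩
    have h1 : tauPt (r:ℤ) ((r:ℤ), (r:ℤ)) = ((0:ℤ), (0:ℤ)) := by simp [tauPt]
    have h2 : tauPt (r:ℤ) (b, -b) = ((r:ℤ) + b, 2*(r:ℤ) - ((r:ℤ) + b)) := by
      simp [tauPt, Prod.ext_iff]; ring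
    rw [h1, h2] at this
    exact this
  · rintro ⟨a, ha, hp⟩
    refine ⟨a - (r:ℤ), ha, ?_⟩
    rw [openPath_tau]
    have h1 : tauPt (r:ℤ) ((r:ℤ), (r:ℤ)) = ((0:ℤ), (0:ℤ)) := by simp [tauPt]
    have h2 : tauPt (r:ℤ) (a - (r:ℤ), -(a - (r:ℤ))) = (a, 2*(r:ℤ) - a) := by
      simp [tauPt, Prod.ext_iff]; omega
    rw [h1, h2]
    exact hp

end OPerc
open OPerc

theorem oriented_perc_diag_lower_bound (q : ℝ) (hq0 : 0 ≤ q) (hq1 : q ≤ 1)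
    (μ : Measure EdgeConf) [IsProbabilityMeasure μ] (hiid : IIDEdges μ q)
    (θ : ℝ) (hθ : θ = (μ {ω | InfOpenPath ω (0, 0)}).toReal) (hθpos : 0 < θ) :
    ∀ r : ℕ, 1 ≤ r →
      (θ / 2) ^ 2 ≤ (μ {ω | OpenPathTo ω (0, 0) ((r : ℤ), (r : ℤ))}).toReal := by
  intro r _
  classical
  set cA : ℤ → Prop := fun a => (r:ℤ) ≤ a with hcA
  set cA' : ℤ → Prop := fun a => a ≤ (r:ℤ) with hcA'
  set cB : ℤ → Prop := fun b => 0 ≤ b with hcB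
  set cB' : ℤ → Prop := fun b => b ≤ 0 with hcB'
  set cT : ℤ → Prop := fun _ => True with hcT
  -- closure of the box under the diagonal reflection
  have hclRho : ∀ e ∈ sE r, sigmaRho e ∈ sE r := by
    intro e he
    rw [mem_sE] at he ⊢
    simp only [sigmaRho]
    tauto
  -- the enlarged box for the antidiagonal reflection
  set s2 : Finset Edge := sE r ∪ (sE r).image (sigmaTau (r:ℤ)) with hs2
  have hsub2 : sE r ⊆ s2 := Finset.subset_union_left
  have hclTau : ∀ e ∈ s2, sigmaTau (r:ℤ) e ∈ s2 := by
    intro e he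
    rcases Finset.mem_union.mp he with h | h
    · exact Finset.mem_union_right _ (Finset.mem_image_of_mem _ h)
    · obtain ⟨e0, he0, rfl⟩ := Finset.mem_image.mp h
      rw [sigmaTau_invol (r:ℤ) e0]
      exact Finset.mem_union_left _ he0
  -- symmetry: μ(A') = μ(A)
  have h1 : μ {ω | FwdEv r cA' ω} = μ {ω | FwdEv r cA ω} := by
    have hp := measure_precomp q hq0 hq1 hiid sigmaRho sigmaRho_invol (sE r) hclRho
      (FwdEv r cA) (FwdEv_local r cA subset_rfl)
    have hset : {ω : EdgeConf | FwdEv r cA (ω ∘ sigmaRho)} = {ω | FwdEv r cA' ω} := by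
      ext ω
      simp only [Set.mem_setOf_eq]
      refine (FwdEv_swap r cA ω).trans ?_
      constructor
      · rintro ⟨a, ha, hp⟩; exact ⟨a, by simp only [hcA, hcA'] at *; omega, hp⟩
      · rintro ⟨a, ha, hp⟩; exact ⟨a, by simp only [hcA, hcA'] at *; omega, hp⟩
    rwa [hset] at hp
  -- symmetry: μ(B') = μ(B)
  have h2 : μ {ω | BwdEv r cB' ω} = μ {ω | BwdEv r cB ω} := by
    have hp := measure_precomp q hq0 hq1 hiid sigmaRho sigmaRho_invol (sE r) hclRho
      (BwdEv r cB) (BwdEv_local r cB subset_rfl)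
    have hset : {ω : EdgeConf | BwdEv r cB (ω ∘ sigmaRho)} = {ω | BwdEv r cB' ω} := by
      ext ω
      simp only [Set.mem_setOf_eq]
      refine (BwdEv_swap r cB ω).trans ?_
      constructor
      · rintro ⟨b, hb, hp⟩; exact ⟨b, by simp only [hcB, hcB'] at *; omega, hp⟩
      · rintro ⟨b, hb, hp⟩; exact ⟨b, by simp only [hcB, hcB'] at *; omega, hp⟩
    rwa [hset] at hp
  -- reversal: μ(D) = μ(BB)
  have h3 : μ {ω | FwdEv r cT ω} = μ {ω | BwdEv r cT ω} := by
    have hp := measure_precomp q hq0 hq1 hiid (sigmaTau (r:ℤ)) (sigmaTau_invol (r:ℤ)) s2 hclTau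
      (BwdEv r cT) (BwdEv_local r cT hsub2)
    have hset : {ω : EdgeConf | BwdEv r cT (ω ∘ sigmaTau (r:ℤ))} = {ω | FwdEv r cT ω} := by
      ext ω
      simp only [Set.mem_setOf_eq]
      refine (BwdEv_tau r cT ω).trans ?_
      constructor
      · rintro ⟨a, _, hp⟩; exact ⟨a, trivial, hp⟩
      · rintro ⟨a, _, hp⟩; exact ⟨a, trivial, hp⟩
    rwa [hset] at hp
  -- the infinite-path event is contained in D (truncation at level 2r)
  have h4 : {ω : EdgeConf | InfOpenPath ω (0, 0)} ⊆ {ω | FwdEv r cT ω} := by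
    rintro ω ⟨f, hf0, hf⟩
    have hstep : ∀ m < 2*r, ∃ d, f (m+1) = f m + dirVec d :=
      fun m _ => (hf m).imp fun d hd => hd.2
    have hsum := path_sum hstep (2*r) le_rfl
    rw [hf0] at hsum
    refine ⟨(f (2*r)).1, trivial, ⟨2*r, f, hf0, ?_, fun m _ => hf m⟩⟩
    have : (f (2*r)).2 = 2*(r:ℤ) - (f (2*r)).1 := by
      simp at hsum; push_cast at hsum ⊢; omega
    rw [← this]
  -- D splits into A and A', BB into B and B'
  have h5 : {ω : EdgeConf | FwdEv r cT ω} ⊆ {ω | FwdEv r cA ω} ∪ {ω | FwdEv r cA' ω} := by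
    rintro ω ⟨a, _, hp⟩
    rcases le_total (r:ℤ) a with h | h
    · exact Or.inl ⟨a, h, hp⟩
    · exact Or.inr ⟨a, h, hp⟩
  have h6 : {ω : EdgeConf | BwdEv r cT ω} ⊆ {ω | BwdEv r cB ω} ∪ {ω | BwdEv r cB' ω} := by
    rintro ω ⟨b, _, hp⟩
    rcases le_total 0 b with h | h
    · exact Or.inl ⟨b, h, hp⟩
    · exact Or.inr ⟨b, h, hp⟩
  -- FKG
  have hAB := measure_fkg q hq0 hq1 hiid (sE r) (FwdEv r cA) (BwdEv r cB)
    (FwdEv_local r cA subset_rfl) (BwdEv_local r cB subset_rfl)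
    (FwdEv_mono r cA) (BwdEv_mono r cB)
  -- crossing
  have hX : {ω : EdgeConf | FwdEv r cA ω ∧ BwdEv r cB ω} ⊆
      {ω | OpenPathTo ω (0, 0) ((r : ℤ), (r : ℤ))} := by
    rintro ω ⟨⟨a, ha, hpA⟩, ⟨b, hb, hpB⟩⟩
    exact cross r ω a b ha hb hpA hpB
  -- real arithmetic
  set A := (μ {ω | FwdEv r cA ω}).toReal with hA
  set B := (μ {ω | BwdEv r cB ω}).toReal with hB
  have hA'A : (μ {ω | FwdEv r cA' ω}).toReal = A := by rw [hA, h1]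
  have hB'B : (μ {ω | BwdEv r cB' ω}).toReal = B := by rw [hB, h2]
  have hθA : θ ≤ 2 * A := by
    have t1 : μ {ω : EdgeConf | InfOpenPath ω (0, 0)} ≤
        μ {ω | FwdEv r cA ω} + μ {ω | FwdEv r cA' ω} :=
      le_trans (measure_mono (h4.trans h5)) (measure_union_le _ _)
    have t2 := ENNReal.toReal_mono
      (ENNReal.add_ne_top.mpr ⟨measure_ne_top _ _, measure_ne_top _ _⟩) t1
    rw [ENNReal.toReal_add (measure_ne_top _ _) (measure_ne_top _ _), hA'A, ← hA, ← hθ] at t2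
    linarith
  have hθB : θ ≤ 2 * B := by
    have t1 : μ {ω : EdgeConf | InfOpenPath ω (0, 0)} ≤
        μ {ω | BwdEv r cB ω} + μ {ω | BwdEv r cB' ω} := by
      calc μ {ω : EdgeConf | InfOpenPath ω (0, 0)} ≤ μ {ω | FwdEv r cT ω} := measure_mono h4
        _ = μ {ω | BwdEv r cT ω} := h3
        _ ≤ μ ({ω | BwdEv r cB ω} ∪ {ω | BwdEv r cB' ω}) := measure_mono h6
        _ ≤ _ := measure_union_le _ _
    have t2 := ENNReal.toReal_mono
      (ENNReal.add_ne_top.mpr ⟨measure_ne_top _ _, measure_ne_top _ _⟩) t1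
    rw [ENNReal.toReal_add (measure_ne_top _ _) (measure_ne_top _ _), hB'B, ← hB, ← hθ] at t2
    linarith
  have hA2 : θ / 2 ≤ A := by linarith
  have hB2 : θ / 2 ≤ B := by linarith
  have h0 : 0 ≤ θ / 2 := by linarith
  calc (θ / 2) ^ 2 = (θ / 2) * (θ / 2) := sq (θ / 2)
    _ ≤ A * B := mul_le_mul hA2 hB2 h0 (le_trans h0 hA2)
    _ ≤ (μ {ω | FwdEv r cA ω ∧ BwdEv r cB ω}).toReal := hAB
    _ ≤ (μ {ω | OpenPathTo ω (0, 0) ((r : ℤ), (r : ℤ))}).toReal :=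
      ENNReal.toReal_mono (measure_ne_top μ _) (measure_mono hX)
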